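/- Let i ∈ {3,4,5}, let β be a finite type, and let H be a subgroup of Equiv.Perm β that is contained in a subgroup of Equiv.Perm β which is a direct sum of regular groups. Let M be a normal subgroup of C_i, N a normal subgroup of H, φ : C_i ⧸ M ≃* H ⧸ N a group isomorphism, and let G = C_i/M ⊕_φ H/N be the corresponding nontrivial subdirect sum (a subgroup of Equiv.Perm (Fin i ⊕ β), nontrivial meaning M ≠ C_i). If H is 2-representable, then G is 2-representable. -/

import Mathlib

/-- The symmetry (invariance) group of a function `f` on boolean tuples indexed by `α`:
all permutations `σ` with `f (x ∘ σ) = f x` for every `x : α → Bool`. -/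
def symmGroup {α V : Type*} (f : (α → Bool) → V) : Subgroup (Equiv.Perm α) where
  carrier := {σ | ∀ x : α → Bool, f (x ∘ σ) = f x}
  one_mem' := by intro x; simp
  mul_mem' := by
    intro a b ha hb x
    have h : x ∘ ⇑(a * b) = (x ∘ ⇑a) ∘ ⇑b := by
      ext y; simp [Equiv.Perm.mul_apply, Function.comp]
    rw [h, hb, ha]
  inv_mem' := by
    intro a ha x
    have h := ha (x ∘ ⇑a⁻¹)
    have h2 : (x ∘ ⇑a⁻¹) ∘ ⇑a = x := by
      ext y; simp [Function.comp]
    rw [h2] at h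
    exact h.symm

/-- A subgroup of `Equiv.Perm α` is `k`-representable if it is the symmetry group of a
`k`-valued boolean function. -/
def Representable (k : ℕ) {α : Type*} (G : Subgroup (Equiv.Perm α)) : Prop :=
  ∃ f : (α → Bool) → Fin k, G = symmGroup f

/-- The direct sum of two permutation groups, acting on the disjoint union. -/
def directSum {α β : Type*} (G : Subgroup (Equiv.Perm α)) (H : Subgroup (Equiv.Perm β)) :
    Subgroup (Equiv.Perm (α ⊕ β)) :=
  (G.prod H).map (Equiv.Perm.sumCongrHom α β)

/-- A permutation group is regular if it is transitive and only the identity has a fixed point. -/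
def IsRegularPermGroup {α : Type*} (G : Subgroup (Equiv.Perm α)) : Prop :=
  (∀ a b : α, ∃ σ ∈ G, σ a = b) ∧ ∀ σ ∈ G, ∀ a : α, σ a = a → σ = 1

/-- `B` is a direct sum of regular groups: under some identification of `α` with a finite
sigma type, `B` consists exactly of the permutations preserving each block and acting on
block `i` as an element of a fixed regular group `G i`. -/
def IsDirectSumOfRegular {α : Type*} (B : Subgroup (Equiv.Perm α)) : Prop :=
  ∃ (ι : Type) (_ : Fintype ι) (β : ι → Type) (_ : ∀ i, Fintype (β i))
    (e : α ≃ Σ i, β i) (G : ∀ i, Subgroup (Equiv.Perm (β i))),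
    (∀ i, IsRegularPermGroup (G i)) ∧
    ∀ π : Equiv.Perm α, π ∈ B ↔
      ∃ g : ∀ i, Equiv.Perm (β i), (∀ i, g i ∈ G i) ∧
        ∀ a : α, e (π a) = ⟨(e a).1, g (e a).1 (e a).2⟩

/-- `C_n`, the cyclic group generated by the cycle `0 ↦ 1 ↦ ⋯ ↦ n-1 ↦ 0`. -/
def Cgroup (n : ℕ) : Subgroup (Equiv.Perm (Fin n)) := Subgroup.zpowers (finRotate n)

/-- The Klein four-group `K₄ ≤ S₄` generated by `(0 1)(2 3)` and `(0 2)(1 3)`. -/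
def K4 : Subgroup (Equiv.Perm (Fin 4)) :=
  Subgroup.closure {Equiv.swap 0 1 * Equiv.swap 2 3, Equiv.swap 0 2 * Equiv.swap 1 3}

/-- Permutation isomorphism of permutation groups. -/
def PermIso {α β : Type*} (G : Subgroup (Equiv.Perm α)) (H : Subgroup (Equiv.Perm β)) : Prop :=
  ∃ e : α ≃ β, ∀ σ : Equiv.Perm α, σ ∈ G ↔ e.permCongr σ ∈ H

/-- A set `S` is regular in `H` if the identity is the only element of `H` mapping `S` to itself. -/
def IsRegularSet {α : Type*} (S : Set α) (H : Subgroup (Equiv.Perm α)) : Prop :=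
  ∀ σ ∈ H, ⇑σ '' S = S → σ = 1

/-- The subdirect sum `G/M ⊕_φ H/N`: all `Equiv.sumCongr σ τ` with `σ ∈ G`, `τ ∈ H` and
`φ (σ M) = τ N`. -/
def subdirectSum {α β : Type*} (G : Subgroup (Equiv.Perm α)) (H : Subgroup (Equiv.Perm β))
    (M : Subgroup G) [M.Normal] (N : Subgroup H) [N.Normal]
    (φ : G ⧸ M ≃* H ⧸ N) : Subgroup (Equiv.Perm (α ⊕ β)) where
  carrier := {π | ∃ (σ : G) (τ : H),
    φ (QuotientGroup.mk σ) = QuotientGroup.mk τ ∧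
    π = Equiv.Perm.sumCongrHom α β ((σ : Equiv.Perm α), (τ : Equiv.Perm β))}
  one_mem' := ⟨1, 1, by simp, by simp⟩
  mul_mem' := by
    rintro _ _ ⟨σ₁, τ₁, h1, rfl⟩ ⟨σ₂, τ₂, h2, rfl⟩
    refine ⟨σ₁ * σ₂, τ₁ * τ₂, ?_, ?_⟩
    · rw [QuotientGroup.mk_mul, QuotientGroup.mk_mul, map_mul, h1, h2]
    · rw [← map_mul]
      rfl
  inv_mem' := by
    rintro _ ⟨σ, τ, h, rfl⟩
    refine ⟨σ⁻¹, τ⁻¹, ?_, ?_⟩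
    · rw [QuotientGroup.mk_inv, QuotientGroup.mk_inv, map_inv, h]
    · rw [← map_inv]
      rfl

section Helpers


lemma mem_symmGroup {α V : Type*} (f : (α → Bool) → V) (σ : Equiv.Perm α) :
    σ ∈ symmGroup f ↔ ∀ x : α → Bool, f (x ∘ ⇑σ) = f x := Iff.rfl

lemma mem_subdirectSum' {α β : Type*} (G : Subgroup (Equiv.Perm α)) (H : Subgroup (Equiv.Perm β))
    (M : Subgroup G) [M.Normal] (N : Subgroup H) [N.Normal]
    (φ : G ⧸ M ≃* H ⧸ N) (π : Equiv.Perm (α ⊕ β)) :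
    π ∈ subdirectSum G H M N φ ↔ ∃ (σ : G) (τ : H),
      φ (QuotientGroup.mk σ) = QuotientGroup.mk τ ∧
      π = Equiv.Perm.sumCongrHom α β ((σ : Equiv.Perm α), (τ : Equiv.Perm β)) := Iff.rfl

lemma pow_mod_of_pow_eq_one {G : Type*} [Group G] {a : G} {i : ℕ} (h : a ^ i = 1)
    (n : ℕ) : a ^ n = a ^ (n % i) := by
  conv_lhs => rw [← Nat.div_add_mod n i]
  rw [pow_add, pow_mul, h, one_pow, one_mul]

lemma enumK {i : ℕ} (hi : 0 < i) (hord : (finRotate i) ^ i = 1) (s : ↥(Cgroup i)) :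
    ∃ k : ℕ, k < i ∧ (s : Equiv.Perm (Fin i)) = (finRotate i) ^ k := by
  obtain ⟨z, hz⟩ := Subgroup.mem_zpowers_iff.mp s.2
  refine ⟨(z % (i : ℤ)).toNat, ?_, ?_⟩
  · have h1 : 0 ≤ z % (i : ℤ) := Int.emod_nonneg z (by exact_mod_cast hi.ne')
    have h2 : z % (i : ℤ) < i := Int.emod_lt_of_pos z (by exact_mod_cast hi)
    omega
  · have h1 : 0 ≤ z % (i : ℤ) := Int.emod_nonneg z (by exact_mod_cast hi.ne')
    have : (finRotate i) ^ ((z % (i:ℤ)).toNat : ℤ) = (finRotate i) ^ z := by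
      rw [Int.toNat_of_nonneg h1]
      have hordz : (finRotate i) ^ ((i : ℤ)) = 1 := by exact_mod_cast hord
      conv_rhs => rw [← Int.emod_add_mul_ediv z i]
      rw [zpow_add, zpow_mul, hordz, one_zpow, mul_one]
    rw [← hz, ← this, zpow_natCast]

def cE (i : ℕ) : ↥(Cgroup i) := ⟨finRotate i, Subgroup.mem_zpowers _⟩

lemma cE_pow_coe (i k : ℕ) : ((cE i ^ k : ↥(Cgroup i)) : Equiv.Perm (Fin i)) = (finRotate i) ^ k := by
  simp [cE]

lemma enumK' {i : ℕ} (hi : 0 < i) (hord : (finRotate i) ^ i = 1) (s : ↥(Cgroup i)) :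
    ∃ k : ℕ, k < i ∧ s = cE i ^ k := by
  obtain ⟨k, hk, h⟩ := enumK hi hord s
  exact ⟨k, hk, Subtype.ext (by rw [cE_pow_coe]; exact h)⟩

lemma cE_mem_top {i : ℕ} (hi : 0 < i) (hord : (finRotate i) ^ i = 1)
    (M : Subgroup (Cgroup i)) (h : cE i ∈ M) : M = ⊤ := by
  rw [Subgroup.eq_top_iff']
  intro y
  obtain ⟨k, _, hk⟩ := enumK' hi hord y
  rw [hk]
  exact pow_mem h k

lemma Mclass3 (M : Subgroup (Cgroup 3)) (hM : M ≠ ⊤) : ∀ m ∈ M, m = 1 := by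
  have hord : (finRotate 3) ^ 3 = 1 := by decide
  have hordE : (cE 3) ^ 3 = 1 := Subtype.ext (by rw [cE_pow_coe]; exact hord)
  intro m hm
  obtain ⟨k, hk, hmk⟩ := enumK' (by norm_num) hord m
  interval_cases k
  · rw [hmk, pow_zero]
  · exfalso; apply hM; apply cE_mem_top (by norm_num) hord
    rw [hmk, pow_one] at hm; exact hm
  · exfalso; apply hM; apply cE_mem_top (by norm_num) hord
    have h1 : cE 3 * (cE 3) ^ 2 = 1 := by rw [← pow_succ']; exact hordE
    have h2 : cE 3 = ((cE 3) ^ 2)⁻¹ := eq_inv_of_mul_eq_one_left h1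
    rw [h2]
    rw [hmk] at hm
    exact inv_mem hm
  -- note: eq_inv_of_mul_eq_one_left : a * b = 1 → b = a⁻¹ ?? check

lemma Mclass5 (M : Subgroup (Cgroup 5)) (hM : M ≠ ⊤) : ∀ m ∈ M, m = 1 := by
  have hord : (finRotate 5) ^ 5 = 1 := by decide
  have hordE : (cE 5) ^ 5 = 1 := Subtype.ext (by rw [cE_pow_coe]; exact hord)
  intro m hm
  obtain ⟨k, hk, hmk⟩ := enumK' (by norm_num) hord m
  rw [hmk] at hm
  interval_cases k
  · rw [hmk, pow_zero]
  · exfalso; apply hM; apply cE_mem_top (by norm_num) hord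
    rwa [pow_one] at hm
  · exfalso; apply hM; apply cE_mem_top (by norm_num) hord
    have h1 : cE 5 * ((cE 5) ^ 2) ^ 2 = 1 := by rw [← pow_mul, ← pow_succ']; exact hordE
    have h2 : cE 5 = (((cE 5) ^ 2) ^ 2)⁻¹ := eq_inv_of_mul_eq_one_left h1
    rw [h2]; exact inv_mem (pow_mem hm 2)
  · exfalso; apply hM; apply cE_mem_top (by norm_num) hord
    have h1 : cE 5 * ((cE 5) ^ 3) ^ 3 = 1 := by
      rw [← pow_mul, ← pow_succ']
      calc (cE 5) ^ 10 = ((cE 5) ^ 5) ^ 2 := by rw [← pow_mul]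
      _ = 1 := by rw [hordE, one_pow]
    have h2 : cE 5 = (((cE 5) ^ 3) ^ 3)⁻¹ := eq_inv_of_mul_eq_one_left h1
    rw [h2]; exact inv_mem (pow_mem hm 3)
  · exfalso; apply hM; apply cE_mem_top (by norm_num) hord
    have h1 : cE 5 * (cE 5) ^ 4 = 1 := by rw [← pow_succ']; exact hordE
    have h2 : cE 5 = ((cE 5) ^ 4)⁻¹ := eq_inv_of_mul_eq_one_left h1
    rw [h2]; exact inv_mem hm

lemma Mclass4 (M : Subgroup (Cgroup 4)) (hM : M ≠ ⊤) : ∀ m ∈ M, m = 1 ∨ m = cE 4 ^ 2 := by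
  have hord : (finRotate 4) ^ 4 = 1 := by decide
  have hordE : (cE 4) ^ 4 = 1 := Subtype.ext (by rw [cE_pow_coe]; exact hord)
  intro m hm
  obtain ⟨k, hk, hmk⟩ := enumK' (by norm_num) hord m
  rw [hmk] at hm ⊢
  interval_cases k
  · left; rw [pow_zero]
  · exfalso; apply hM; apply cE_mem_top (by norm_num) hord
    rwa [pow_one] at hm
  · right; rfl
  · exfalso; apply hM; apply cE_mem_top (by norm_num) hord
    have h1 : cE 4 * (cE 4) ^ 3 = 1 := by rw [← pow_succ']; exact hordE
    have h2 : cE 4 = ((cE 4) ^ 3)⁻¹ := eq_inv_of_mul_eq_one_left h1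
    rw [h2]; exact inv_mem hm

lemma auxC_bot' {i : ℕ} (M : Subgroup (Cgroup i)) [M.Normal] (hMbot : ∀ m ∈ M, m = 1)
    (u₀ : Fin i → Bool) (z : Fin i) (hz : ∀ x, u₀ x = true ↔ x = z)
    (htrans : ∀ a : Fin i, ∃ s : ↥(Cgroup i), (s : Equiv.Perm (Fin i)) a = z)
    (σ : Equiv.Perm (Fin i)) (θ : ↥(Cgroup i) ⧸ M)
    (hA1 : ∀ s : ↥(Cgroup i), ∃ s' : ↥(Cgroup i),
      u₀ ∘ ⇑(s : Equiv.Perm (Fin i)) ∘ ⇑σ = u₀ ∘ ⇑(s' : Equiv.Perm (Fin i)) ∧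
      (QuotientGroup.mk s' : ↥(Cgroup i) ⧸ M) = QuotientGroup.mk s * θ) :
    ∃ s₀ : ↥(Cgroup i), (s₀ : Equiv.Perm (Fin i)) = σ ∧
      (QuotientGroup.mk s₀ : ↥(Cgroup i) ⧸ M) = θ := by
  obtain ⟨t₀, ht₀⟩ := QuotientGroup.mk_surjective θ
  have hkey : ∀ s : ↥(Cgroup i),
      u₀ ∘ ⇑(s : Equiv.Perm (Fin i)) ∘ ⇑σ = u₀ ∘ ⇑((s * t₀ : ↥(Cgroup i)) : Equiv.Perm (Fin i)) := by
    intro s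
    obtain ⟨s', h1, h2⟩ := hA1 s
    have heq : (QuotientGroup.mk s' : ↥(Cgroup i) ⧸ M) = QuotientGroup.mk (s * t₀) := by
      rw [h2, ← ht₀, QuotientGroup.mk_mul]
    have hm : (s * t₀)⁻¹ * s' ∈ M := QuotientGroup.eq.mp heq.symm
    have h3 := hMbot _ hm
    rw [inv_mul_eq_one] at h3
    rwa [← h3] at h1
  refine ⟨t₀, ?_, ht₀⟩
  ext x
  obtain ⟨s, hs⟩ := htrans ((t₀ : Equiv.Perm (Fin i)) x)
  have h := congrFun (hkey s) x
  simp only [Function.comp_apply, Subgroup.coe_mul, Equiv.Perm.coe_mul] at h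
  have hr : u₀ ((s : Equiv.Perm (Fin i)) ((t₀ : Equiv.Perm (Fin i)) x)) = true := by
    rw [hz]; exact hs
  rw [hr] at h
  have h4 := (hz _).mp h
  have h5 := (s : Equiv.Perm (Fin i)).injective (h4.trans hs.symm)
  exact congrArg Fin.val h5.symm

set_option maxRecDepth 100000 in
lemma decideC4 : ∀ (σ : Equiv.Perm (Fin 4)) (j : Fin 4),
    (∀ k : Fin 4,
      ((fun x : Fin 4 => decide (x = 0)) ∘ ⇑((finRotate 4) ^ (k:ℕ)) ∘ ⇑σ =
        (fun x : Fin 4 => decide (x = 0)) ∘ ⇑((finRotate 4) ^ (((k + j : Fin 4)):ℕ)) ∨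
       (fun x : Fin 4 => decide (x = 0)) ∘ ⇑((finRotate 4) ^ (k:ℕ)) ∘ ⇑σ =
        (fun x : Fin 4 => decide (x = 0)) ∘ ⇑((finRotate 4) ^ (((k + j + 2 : Fin 4)):ℕ)))) →
    (∀ k : Fin 4,
      ((fun x : Fin 4 => decide (x = 0 ∨ x = 1)) ∘ ⇑((finRotate 4) ^ (k:ℕ)) ∘ ⇑σ =
        (fun x : Fin 4 => decide (x = 0 ∨ x = 1)) ∘ ⇑((finRotate 4) ^ (((k + j : Fin 4)):ℕ)) ∨
       (fun x : Fin 4 => decide (x = 0 ∨ x = 1)) ∘ ⇑((finRotate 4) ^ (k:ℕ)) ∘ ⇑σ =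
        (fun x : Fin 4 => decide (x = 0 ∨ x = 1)) ∘ ⇑((finRotate 4) ^ (((k + j + 2 : Fin 4)):ℕ)))) →
    (σ = (finRotate 4) ^ ((j:ℕ)) ∨ σ = (finRotate 4) ^ (((j + 2 : Fin 4)):ℕ)) := by decide

lemma hC4 (M : Subgroup (Cgroup 4)) [M.Normal] (hM : M ≠ ⊤)
    (σ : Equiv.Perm (Fin 4)) (θ : ↥(Cgroup 4) ⧸ M)
    (hA1 : ∀ s : ↥(Cgroup 4), ∃ s' : ↥(Cgroup 4),
      (fun x : Fin 4 => decide (x = 0)) ∘ ⇑(s : Equiv.Perm (Fin 4)) ∘ ⇑σ =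
        (fun x : Fin 4 => decide (x = 0)) ∘ ⇑(s' : Equiv.Perm (Fin 4)) ∧
      (QuotientGroup.mk s' : ↥(Cgroup 4) ⧸ M) = QuotientGroup.mk s * θ)
    (hA2 : ∀ s : ↥(Cgroup 4), ∃ s' : ↥(Cgroup 4),
      (fun x : Fin 4 => decide (x = 0 ∨ x = 1)) ∘ ⇑(s : Equiv.Perm (Fin 4)) ∘ ⇑σ =
        (fun x : Fin 4 => decide (x = 0 ∨ x = 1)) ∘ ⇑(s' : Equiv.Perm (Fin 4)) ∧
      (QuotientGroup.mk s' : ↥(Cgroup 4) ⧸ M) = QuotientGroup.mk s * θ) :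
    ∃ s₀ : ↥(Cgroup 4), (s₀ : Equiv.Perm (Fin 4)) = σ ∧
      (QuotientGroup.mk s₀ : ↥(Cgroup 4) ⧸ M) = θ := by
  have hord : (finRotate 4) ^ 4 = 1 := by decide
  have hordE : (cE 4) ^ 4 = 1 := Subtype.ext (by rw [cE_pow_coe]; exact hord)
  by_cases hbot : ∀ m ∈ M, m = 1
  · refine auxC_bot' M hbot (fun x : Fin 4 => decide (x = 0)) 0 (by decide) ?_ σ θ hA1
    intro a
    have h : ∀ a : Fin 4, ∃ k : Fin 4, ((finRotate 4) ^ (k:ℕ)) a = 0 := by decide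
    obtain ⟨k, hk⟩ := h a
    exact ⟨cE 4 ^ (k:ℕ), by rw [cE_pow_coe]; exact hk⟩
  · push_neg at hbot
    obtain ⟨m, hmM, hm1⟩ := hbot
    have hM2 : cE 4 ^ 2 ∈ M := by
      rcases Mclass4 M hM m hmM with h | h
      · exact absurd h hm1
      · rwa [← h]
    obtain ⟨t₀, ht₀⟩ := QuotientGroup.mk_surjective θ
    obtain ⟨j', hj', hjt⟩ := enumK' (by norm_num) hord t₀
    set j : Fin 4 := ⟨j', hj'⟩ with hjdef
    have hjval : (j : ℕ) = j' := rfl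
    have key : ∀ (v₀ : Fin 4 → Bool),
        (∀ s : ↥(Cgroup 4), ∃ s' : ↥(Cgroup 4),
          v₀ ∘ ⇑(s : Equiv.Perm (Fin 4)) ∘ ⇑σ = v₀ ∘ ⇑(s' : Equiv.Perm (Fin 4)) ∧
          (QuotientGroup.mk s' : ↥(Cgroup 4) ⧸ M) = QuotientGroup.mk s * θ) →
        ∀ k : Fin 4,
          (v₀ ∘ ⇑((finRotate 4) ^ ((k:ℕ))) ∘ ⇑σ = v₀ ∘ ⇑((finRotate 4) ^ (((k + j : Fin 4)):ℕ)) ∨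
           v₀ ∘ ⇑((finRotate 4) ^ ((k:ℕ))) ∘ ⇑σ = v₀ ∘ ⇑((finRotate 4) ^ (((k + j + 2 : Fin 4)):ℕ))) := by
      intro v₀ hA k
      obtain ⟨s', h1, h2⟩ := hA (cE 4 ^ (k:ℕ))
      rw [cE_pow_coe] at h1
      have heq : (QuotientGroup.mk s' : ↥(Cgroup 4) ⧸ M)
          = QuotientGroup.mk (cE 4 ^ (k:ℕ) * t₀) := by
        rw [h2, ← ht₀, QuotientGroup.mk_mul]
      have hmem := QuotientGroup.eq.mp heq.symm
      have hcoe1 : ((cE 4 ^ (k:ℕ) * t₀ : ↥(Cgroup 4)) : Equiv.Perm (Fin 4))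
          = (finRotate 4) ^ (((k + j : Fin 4)):ℕ) := by
        rw [Subgroup.coe_mul, hjt, cE_pow_coe, cE_pow_coe, ← pow_add,
          pow_mod_of_pow_eq_one hord ((k:ℕ) + j')]
        congr 1
        all_goals simp only [Fin.val_add, hjval]
        all_goals omega
      have hcoe2 : ((cE 4 ^ (k:ℕ) * t₀ * cE 4 ^ 2 : ↥(Cgroup 4)) : Equiv.Perm (Fin 4))
          = (finRotate 4) ^ (((k + j + 2 : Fin 4)):ℕ) := by
        rw [Subgroup.coe_mul, Subgroup.coe_mul, hjt, cE_pow_coe, cE_pow_coe, cE_pow_coe,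
          ← pow_add, ← pow_add, pow_mod_of_pow_eq_one hord ((k:ℕ) + j' + 2)]
        congr 1
        all_goals simp only [Fin.val_add, hjval]
        all_goals omega
      rcases Mclass4 M hM _ hmem with h | h
      · left
        rw [inv_mul_eq_one] at h
        rw [← h] at h1
        rw [← hcoe1]
        exact h1
      · right
        rw [inv_mul_eq_iff_eq_mul] at h
        rw [h] at h1
        rw [← hcoe2]
        exact h1
    have hdec := decideC4 σ j (key _ hA1) (key _ hA2)
    rcases hdec with h | h
    · refine ⟨t₀, ?_, ht₀⟩
      rw [hjval] at h
      rw [hjt, cE_pow_coe]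
      exact h.symm
    · refine ⟨cE 4 ^ ((j:ℕ)) * cE 4 ^ 2, ?_, ?_⟩
      · rw [Subgroup.coe_mul, cE_pow_coe, cE_pow_coe, ← pow_add, h,
          pow_mod_of_pow_eq_one hord ((j:ℕ) + 2)]
        congr 1
        all_goals simp only [Fin.val_add]
        all_goals omega
      · have ht : (t₀ : ↥(Cgroup 4)) = cE 4 ^ (j:ℕ) := by
          rw [hjval]; exact hjt
        rw [QuotientGroup.mk_mul, ← ht, ht₀, (QuotientGroup.eq_one_iff _).mpr hM2, mul_one]

lemma exists_free_point {β : Type*} (B : Subgroup (Equiv.Perm β))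
    (hB : IsDirectSumOfRegular B) :
    ∃ y₀ : β → Bool, (∀ π ∈ B, y₀ ∘ ⇑π = y₀ → π = 1) ∧ (∀ b : β, ∃ b', y₀ b' = true) := by
  classical
  obtain ⟨ι, _, βf, _, e, Gf, hreg, hspec⟩ := hB
  set pick : ∀ j : ι, Nonempty (βf j) → βf j := fun j h => Classical.choice h with hpick
  have pickirr : ∀ (j : ι) (h1 h2 : Nonempty (βf j)), pick j h1 = pick j h2 := by
    intro j h1 h2; rw [Subsingleton.elim h1 h2]
  set y₀ : β → Bool := fun b => decide (e.symm ⟨(e b).1, pick (e b).1 ⟨(e b).2⟩⟩ = b) with hy₀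
  have ychar : ∀ (b : β) (j : ι) (w : βf j), e b = ⟨j, w⟩ →
      (y₀ b = true ↔ w = pick j ⟨w⟩) := by
    intro b j w hb
    simp only [hy₀, decide_eq_true_eq]
    rw [hb]
    constructor
    · intro h
      have : e (e.symm ⟨j, pick j ⟨w⟩⟩) = e b := by rw [h]
      rw [e.apply_symm_apply, hb] at this
      have h2 := (Sigma.mk.inj_iff.mp this).2
      exact (eq_of_heq h2).symm
    · intro h
      rw [← h, ← hb, e.symm_apply_apply]
  refine ⟨y₀, ?_, ?_⟩
  · intro π hπ hfix
    obtain ⟨g, hg, hga⟩ := (hspec π).mp hπ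
    have hgj : ∀ (j : ι) (w : βf j), g j w = w := by
      intro j w
      set p : βf j := pick j ⟨w⟩ with hp
      set a' : β := e.symm ⟨j, p⟩ with ha'
      have hea' : e a' = ⟨j, p⟩ := e.apply_symm_apply _
      have hya' : y₀ a' = true := (ychar a' j p hea').mpr (pickirr j _ _)
      have hyπ := congrFun hfix a'
      simp only [Function.comp_apply, hya'] at hyπ
      have heπ : e (π a') = ⟨j, g j p⟩ := by rw [hga a', hea']
      rw [ychar (π a') j (g j p) heπ] at hyπ
      rw [pickirr j ⟨g j p⟩ ⟨w⟩] at hyπ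
      have hfixpt : g j p = p := hyπ.trans hp.symm
      have hgj1 : g j = 1 := (hreg j).2 _ (hg j) p hfixpt
      rw [hgj1]; rfl
    ext a
    have h1 := hga a
    have h2 : e (π a) = e a := by rw [h1, hgj]
    exact e.injective h2
  · intro b
    set a' : β := e.symm ⟨(e b).1, pick (e b).1 ⟨(e b).2⟩⟩ with ha'
    have hea' : e a' = ⟨(e b).1, pick (e b).1 ⟨(e b).2⟩⟩ := e.apply_symm_apply _
    exact ⟨a', (ychar a' (e b).1 (pick (e b).1 ⟨(e b).2⟩) hea').mpr (pickirr _ _ _)⟩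

def wt {γ : Type*} [Fintype γ] (v : γ → Bool) : ℕ :=
  (Finset.univ.filter (fun a => v a = true)).card

lemma wt_comp_perm {γ : Type*} [Fintype γ] (v : γ → Bool) (σ : Equiv.Perm γ) :
    wt (v ∘ ⇑σ) = wt v := by
  unfold wt
  apply Finset.card_bij (fun a _ => σ a)
  · intro a ha; simp_all [Function.comp]
  · intro a _ b _ h; exact σ.injective h
  · intro b hb
    refine ⟨σ.symm b, ?_, by simp⟩
    simp_all [Function.comp]

lemma wt_top {γ : Type*} [Fintype γ] : wt (fun _ : γ => true) = Fintype.card γ := by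
  simp [wt]

lemma wt_single {γ : Type*} [Fintype γ] [DecidableEq γ] (a : γ) :
    wt (fun c => decide (c = a)) = 1 := by
  simp [wt, Finset.filter_eq']

lemma aux_main {i : ℕ} (hi3 : 3 ≤ i) {β : Type*} [Fintype β]
    (H : Subgroup (Equiv.Perm β))
    (M : Subgroup (Cgroup i)) [M.Normal] (N : Subgroup H) [N.Normal]
    (φ : ↥(Cgroup i) ⧸ M ≃* ↥H ⧸ N)
    (u₀ p₀ : Fin i → Bool) (y₀ : β → Bool)
    (hwu : wt u₀ = 1) (hwp : wt p₀ = 2)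
    (hy₀ : ∃ b, y₀ b = true)
    (hy₀free : ∀ r r' : ↥H, y₀ ∘ ⇑(r : Equiv.Perm β) = y₀ ∘ ⇑(r' : Equiv.Perm β) → r = r')
    (f₀ : (β → Bool) → Fin 2) (hf₀ : H = symmGroup f₀)
    (hC : ∀ (σ : Equiv.Perm (Fin i)) (θ : ↥(Cgroup i) ⧸ M),
      (∀ s : ↥(Cgroup i), ∃ s' : ↥(Cgroup i),
        u₀ ∘ ⇑(s : Equiv.Perm (Fin i)) ∘ ⇑σ = u₀ ∘ ⇑(s' : Equiv.Perm (Fin i)) ∧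
        (QuotientGroup.mk s' : ↥(Cgroup i) ⧸ M) = QuotientGroup.mk s * θ) →
      (∀ s : ↥(Cgroup i), ∃ s' : ↥(Cgroup i),
        p₀ ∘ ⇑(s : Equiv.Perm (Fin i)) ∘ ⇑σ = p₀ ∘ ⇑(s' : Equiv.Perm (Fin i)) ∧
        (QuotientGroup.mk s' : ↥(Cgroup i) ⧸ M) = QuotientGroup.mk s * θ) →
      ∃ s₀ : ↥(Cgroup i), (s₀ : Equiv.Perm (Fin i)) = σ ∧
        (QuotientGroup.mk s₀ : ↥(Cgroup i) ⧸ M) = θ) :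
    Representable 2 (subdirectSum (Cgroup i) H M N φ) := by
  classical
  set F : (Fin i ⊕ β → Bool) → Prop := fun x =>
    (wt (x ∘ Sum.inl) = 1 ∧ x ∘ Sum.inr = fun _ => false) ∨
    (x ∘ Sum.inl = (fun _ => true) ∧ f₀ (x ∘ Sum.inr) = 0) ∨
    (∃ (s : ↥(Cgroup i)) (r : ↥H), φ (QuotientGroup.mk s) = QuotientGroup.mk r ∧
      x ∘ Sum.inl = u₀ ∘ ⇑(s : Equiv.Perm (Fin i)) ∧ x ∘ Sum.inr = y₀ ∘ ⇑(r : Equiv.Perm β)) ∨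
    (∃ (s : ↥(Cgroup i)) (r : ↥H), φ (QuotientGroup.mk s) = QuotientGroup.mk r ∧
      x ∘ Sum.inl = p₀ ∘ ⇑(s : Equiv.Perm (Fin i)) ∧ x ∘ Sum.inr = y₀ ∘ ⇑(r : Equiv.Perm β))
    with hFdef
  have hcard : Fintype.card (Fin i) = i := Fintype.card_fin i
  have hynotbot : ∀ g : Equiv.Perm β, ¬ (y₀ ∘ ⇑g = fun _ => false) := by
    intro g h
    obtain ⟨b, hb⟩ := hy₀
    have := congrFun h (g⁻¹ b)
    simp only [Function.comp_apply, Equiv.Perm.coe_inv, Equiv.apply_symm_apply] at this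
    rw [hb] at this; exact Bool.true_eq_false.mp this
  -- invariance of F under elements of the subdirect sum
  have hFstep : ∀ (a : ↥(Cgroup i)) (b : ↥H),
      φ (QuotientGroup.mk a) = QuotientGroup.mk b →
      ∀ x, F x → F (x ∘ ⇑(Equiv.sumCongr (a : Equiv.Perm (Fin i)) (b : Equiv.Perm β))) := by
    intro a b hab x hx
    have hl : (x ∘ ⇑(Equiv.sumCongr (a : Equiv.Perm (Fin i)) (b : Equiv.Perm β))) ∘ Sum.inl
        = (x ∘ Sum.inl) ∘ ⇑(a : Equiv.Perm (Fin i)) := rfl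
    have hr : (x ∘ ⇑(Equiv.sumCongr (a : Equiv.Perm (Fin i)) (b : Equiv.Perm β))) ∘ Sum.inr
        = (x ∘ Sum.inr) ∘ ⇑(b : Equiv.Perm β) := rfl
    rcases hx with ⟨h1, h2⟩ | ⟨h1, h2⟩ | ⟨s, r, hsr, h1, h2⟩ | ⟨s, r, hsr, h1, h2⟩
    · left
      constructor
      · rw [hl, wt_comp_perm, h1]
      · rw [hr, h2]; rfl
    · right; left
      constructor
      · rw [hl, h1]; rfl
      · rw [hr]
        have hbH : (b : Equiv.Perm β) ∈ symmGroup f₀ := by rw [← hf₀]; exact b.2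
        rw [hbH (x ∘ Sum.inr), h2]
    · right; right; left
      refine ⟨s * a, r * b, ?_, ?_, ?_⟩
      · rw [QuotientGroup.mk_mul, QuotientGroup.mk_mul, map_mul, hsr, hab]
      · rw [hl, h1, Subgroup.coe_mul, Equiv.Perm.coe_mul]; rfl
      · rw [hr, h2, Subgroup.coe_mul, Equiv.Perm.coe_mul]; rfl
    · right; right; right
      refine ⟨s * a, r * b, ?_, ?_, ?_⟩
      · rw [QuotientGroup.mk_mul, QuotientGroup.mk_mul, map_mul, hsr, hab]
      · rw [hl, h1, Subgroup.coe_mul, Equiv.Perm.coe_mul]; rfl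
      · rw [hr, h2, Subgroup.coe_mul, Equiv.Perm.coe_mul]; rfl
  have hFiffG : ∀ (a : ↥(Cgroup i)) (b : ↥H),
      φ (QuotientGroup.mk a) = QuotientGroup.mk b →
      ∀ x, F (x ∘ ⇑(Equiv.sumCongr (a : Equiv.Perm (Fin i)) (b : Equiv.Perm β))) ↔ F x := by
    intro a b hab x
    constructor
    · intro h
      have hab' : φ (QuotientGroup.mk a⁻¹) = QuotientGroup.mk b⁻¹ := by
        rw [QuotientGroup.mk_inv, QuotientGroup.mk_inv, map_inv, hab]
      have := hFstep a⁻¹ b⁻¹ hab' _ h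
      have hcomp : (x ∘ ⇑(Equiv.sumCongr (a : Equiv.Perm (Fin i)) (b : Equiv.Perm β))) ∘
          ⇑(Equiv.sumCongr ((a⁻¹ : ↥(Cgroup i)) : Equiv.Perm (Fin i)) ((b⁻¹ : ↥H) : Equiv.Perm β)) = x := by
        funext c
        rcases c with c | c <;>
          simp [Function.comp, Equiv.sumCongr_apply]
      rwa [hcomp] at this
    · exact hFstep a b hab x
  refine ⟨fun x => if F x then 1 else 0, ?_⟩
  ext π
  constructor
  · rw [mem_subdirectSum']
    rintro ⟨a, b, hab, rfl⟩
    rw [mem_symmGroup]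
    intro x
    have := hFiffG a b hab x
    have heq : Equiv.Perm.sumCongrHom (Fin i) β ((a : Equiv.Perm (Fin i)), (b : Equiv.Perm β))
        = Equiv.sumCongr (a : Equiv.Perm (Fin i)) (b : Equiv.Perm β) := rfl
    rw [heq]
    by_cases h : F x
    · rw [if_pos h, if_pos (this.mpr h)]
    · rw [if_neg h, if_neg (fun hc => h (this.mp hc))]
  · intro hπ
    rw [mem_symmGroup] at hπ
    have hFiffπ : ∀ x, F (x ∘ ⇑π) ↔ F x := by
      intro x
      have h := hπ x
      by_cases h1 : F (x ∘ ⇑π) <;> by_cases h2 : F x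
      · exact iff_of_true h1 h2
      · rw [if_pos h1, if_neg h2] at h; exact absurd h one_ne_zero
      · rw [if_neg h1, if_pos h2] at h; exact absurd h.symm one_ne_zero
      · exact iff_of_false h1 h2
    have hπinv : ∀ x, F (x ∘ ⇑π⁻¹) ↔ F x := by
      intro x
      have := (hFiffπ (x ∘ ⇑π⁻¹)).symm
      have hcomp : (x ∘ ⇑π⁻¹) ∘ ⇑π = x := by
        funext c; simp [Function.comp]
      rwa [hcomp] at this
    -- block preservation
    have hkey : ∀ (ρ : Equiv.Perm (Fin i ⊕ β)), (∀ x, F (x ∘ ⇑ρ) ↔ F x) →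
        ∀ a : Fin i, ∃ a', ρ.symm (Sum.inl a) = Sum.inl a' := by
      intro ρ hρ a
      set x : Fin i ⊕ β → Bool := fun c => decide (c = Sum.inl a) with hxdef
      have hxl : x ∘ Sum.inl = fun c : Fin i => decide (c = a) := by
        funext c; simp [hxdef]
      have hxr : x ∘ Sum.inr = fun _ : β => false := by
        funext c; simp [hxdef]
      have hx : F x := by
        left
        exact ⟨by rw [hxl, wt_single], hxr⟩
      have hx2 := (hρ x).mpr hx
      have hxρ : x ∘ ⇑ρ = fun c => decide (c = ρ.symm (Sum.inl a)) := by
        funext c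
        simp only [Function.comp_apply, hxdef]
        rw [decide_eq_decide]
        exact ⟨fun h => by rw [← h, Equiv.symm_apply_apply], fun h => by rw [h, Equiv.apply_symm_apply]⟩
      rw [hxρ] at hx2
      rcases hcase : ρ.symm (Sum.inl a) with a' | b'
      · exact ⟨a', rfl⟩
      · exfalso
        rw [hcase] at hx2
        have hul : (fun c : Fin i ⊕ β => decide (c = Sum.inr b')) ∘ Sum.inl = fun _ : Fin i => false := by
          funext c; simp
        have hwt0 : wt ((fun c : Fin i ⊕ β => decide (c = Sum.inr b')) ∘ Sum.inl) = 0 := by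
          rw [hul]; simp [wt]
        rcases hx2 with ⟨h1, _⟩ | ⟨h1, _⟩ | ⟨s, r, _, h1, _⟩ | ⟨s, r, _, h1, _⟩
        · rw [h1] at hwt0; omega
        · rw [h1, wt_top, hcard] at hwt0; omega
        · rw [h1, wt_comp_perm, hwu] at hwt0; omega
        · rw [h1, wt_comp_perm, hwp] at hwt0; omega
    -- construct σ and τ
    have h1 : ∀ a : Fin i, ∃ a', π (Sum.inl a) = Sum.inl a' := by
      intro a
      obtain ⟨a', ha'⟩ := hkey π⁻¹ hπinv a
      exact ⟨a', by simpa [Equiv.Perm.inv_def] using ha'⟩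
    have h2 : ∀ b : β, ∃ b', π (Sum.inr b) = Sum.inr b' := by
      intro b
      rcases hcase : π (Sum.inr b) with a' | b'
      · exfalso
        obtain ⟨a'', ha''⟩ := hkey π hFiffπ a'
        have : π.symm (Sum.inl a') = Sum.inr b := by
          rw [← hcase, Equiv.symm_apply_apply]
        rw [this] at ha''
        exact nomatch ha''
      · exact ⟨b', rfl⟩
    have hinjσ : Function.Injective (fun a => (h1 a).choose) := by
      intro a1 a2 h
      simp only at h
      have e1 := (h1 a1).choose_spec
      have e2 := (h1 a2).choose_spec
      have : π (Sum.inl a1) = π (Sum.inl a2) := by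
        rw [e1, e2]; exact congrArg Sum.inl h
      exact Sum.inl.inj (π.injective this)
    have hinjτ : Function.Injective (fun b => (h2 b).choose) := by
      intro b1 b2 h
      simp only at h
      have e1 := (h2 b1).choose_spec
      have e2 := (h2 b2).choose_spec
      have : π (Sum.inr b1) = π (Sum.inr b2) := by
        rw [e1, e2]; exact congrArg Sum.inr h
      exact Sum.inr.inj (π.injective this)
    set σ : Equiv.Perm (Fin i) :=
      Equiv.ofBijective _ (Finite.injective_iff_bijective.mp hinjσ) with hσdef
    set τ : Equiv.Perm β :=
      Equiv.ofBijective _ (Finite.injective_iff_bijective.mp hinjτ) with hτdef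
    have hπeq : π = Equiv.sumCongr σ τ := by
      ext c
      rcases c with a | b
      · rw [(h1 a).choose_spec]; rfl
      · rw [(h2 b).choose_spec]; rfl
    have hFiffστ : ∀ x, F (x ∘ ⇑(Equiv.sumCongr σ τ)) ↔ F x := by
      intro x; rw [← hπeq]; exact hFiffπ x
    -- τ ∈ H
    have hDtop : ∀ x, x ∘ Sum.inl = (fun _ : Fin i => true) → (F x ↔ f₀ (x ∘ Sum.inr) = 0) := by
      intro x hx
      constructor
      · intro hFx
        rcases hFx with ⟨hw, _⟩ | ⟨_, hv⟩ | ⟨s, r, _, hw, _⟩ | ⟨s, r, _, hw, _⟩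
        · rw [hx, wt_top, hcard] at hw; omega
        · exact hv
        · rw [hx] at hw
          have := congrArg wt hw
          rw [wt_top, hcard, wt_comp_perm, hwu] at this; omega
        · rw [hx] at hw
          have := congrArg wt hw
          rw [wt_top, hcard, wt_comp_perm, hwp] at this; omega
      · intro h; right; left; exact ⟨hx, h⟩
    have hτmem : τ ∈ H := by
      rw [hf₀, mem_symmGroup]
      intro y
      set x : Fin i ⊕ β → Bool := Sum.elim (fun _ => true) y with hxdef
      have e1 : x ∘ Sum.inl = fun _ : Fin i => true := rfl
      have e2 : x ∘ Sum.inr = y := rfl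
      have e1' : (x ∘ ⇑(Equiv.sumCongr σ τ)) ∘ Sum.inl = fun _ : Fin i => true := rfl
      have e2' : (x ∘ ⇑(Equiv.sumCongr σ τ)) ∘ Sum.inr = y ∘ ⇑τ := rfl
      have hiff := hFiffστ x
      rw [hDtop x e1, hDtop _ e1', e2, e2'] at hiff
      have h2v : ∀ v w : Fin 2, (v = 0 ↔ w = 0) → v = w := by decide
      exact h2v _ _ hiff
    set τh : ↥H := ⟨τ, hτmem⟩ with hτh
    set θ : ↥(Cgroup i) ⧸ M := φ.symm (QuotientGroup.mk τh) with hθdef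
    have hφθ : φ θ = QuotientGroup.mk τh := MulEquiv.apply_symm_apply φ _
    -- A1 and A2
    have hA : ∀ (v₀ : Fin i → Bool),
        (∀ (s' : ↥(Cgroup i)) (r : ↥H), φ (QuotientGroup.mk s') = QuotientGroup.mk r →
          F (Sum.elim (v₀ ∘ ⇑(s' : Equiv.Perm (Fin i))) (y₀ ∘ ⇑(r : Equiv.Perm β)))) →
        (∀ x, (wt (x ∘ Sum.inl) = wt v₀ ∧ x ∘ Sum.inr ≠ (fun _ => false)) → F x →
          (∃ (s : ↥(Cgroup i)) (r : ↥H), φ (QuotientGroup.mk s) = QuotientGroup.mk r ∧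
            x ∘ Sum.inl = v₀ ∘ ⇑(s : Equiv.Perm (Fin i)) ∧
            x ∘ Sum.inr = y₀ ∘ ⇑(r : Equiv.Perm β))) →
        ∀ s : ↥(Cgroup i), ∃ s' : ↥(Cgroup i),
          v₀ ∘ ⇑(s : Equiv.Perm (Fin i)) ∘ ⇑σ = v₀ ∘ ⇑(s' : Equiv.Perm (Fin i)) ∧
          (QuotientGroup.mk s' : ↥(Cgroup i) ⧸ M) = QuotientGroup.mk s * θ := by
      intro v₀ hmk hchar s
      obtain ⟨rq, hrq⟩ := QuotientGroup.mk_surjective (φ (QuotientGroup.mk s))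
      set x : Fin i ⊕ β → Bool :=
        Sum.elim (v₀ ∘ ⇑(s : Equiv.Perm (Fin i))) (y₀ ∘ ⇑(rq : Equiv.Perm β)) with hxdef
      have hFx : F x := hmk s rq hrq.symm
      set x' : Fin i ⊕ β → Bool := x ∘ ⇑(Equiv.sumCongr σ τ) with hx'def
      have hFx2 : F x' := (hFiffστ x).mpr hFx
      have e1' : x' ∘ Sum.inl = (v₀ ∘ ⇑(s : Equiv.Perm (Fin i))) ∘ ⇑σ := rfl
      have e2' : x' ∘ Sum.inr = y₀ ∘ ⇑((rq : Equiv.Perm β) * τ) := rfl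
      have hwtx' : wt (x' ∘ Sum.inl) = wt v₀ := by
        rw [e1', wt_comp_perm, wt_comp_perm]
      have hnex' : x' ∘ Sum.inr ≠ (fun _ => false) := by
        rw [e2']; exact hynotbot _
      obtain ⟨s', r', hphi, hu, hy⟩ := hchar x' ⟨hwtx', hnex'⟩ hFx2
      refine ⟨s', ?_, ?_⟩
      · rw [← hu]; rfl
      · have hr' : rq * τh = r' := by
          apply hy₀free
          rw [← hy, e2']
          rfl
        have hinj : φ (QuotientGroup.mk s') = φ (QuotientGroup.mk s * θ) := by
          rw [map_mul, hφθ, hphi, ← hr', QuotientGroup.mk_mul, hrq]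
        exact φ.injective hinj
    have hcharU : ∀ x, (wt (x ∘ Sum.inl) = wt u₀ ∧ x ∘ Sum.inr ≠ (fun _ => false)) → F x →
        (∃ (s : ↥(Cgroup i)) (r : ↥H), φ (QuotientGroup.mk s) = QuotientGroup.mk r ∧
          x ∘ Sum.inl = u₀ ∘ ⇑(s : Equiv.Perm (Fin i)) ∧
          x ∘ Sum.inr = y₀ ∘ ⇑(r : Equiv.Perm β)) := by
      intro x ⟨hwt, hne⟩ hFx
      rw [hwu] at hwt
      rcases hFx with ⟨h1, h2⟩ | ⟨h1, _⟩ | hD | ⟨ss, rr, _, h1, _⟩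
      · exact absurd h2 hne
      · rw [h1, wt_top, hcard] at hwt; omega
      · exact hD
      · rw [h1, wt_comp_perm, hwp] at hwt; omega
    have hcharP : ∀ x, (wt (x ∘ Sum.inl) = wt p₀ ∧ x ∘ Sum.inr ≠ (fun _ => false)) → F x →
        (∃ (s : ↥(Cgroup i)) (r : ↥H), φ (QuotientGroup.mk s) = QuotientGroup.mk r ∧
          x ∘ Sum.inl = p₀ ∘ ⇑(s : Equiv.Perm (Fin i)) ∧
          x ∘ Sum.inr = y₀ ∘ ⇑(r : Equiv.Perm β)) := by
      intro x ⟨hwt, hne⟩ hFx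
      rw [hwp] at hwt
      rcases hFx with ⟨h1, _⟩ | ⟨h1, _⟩ | ⟨ss, rr, _, h1, _⟩ | hD
      · omega
      · rw [h1, wt_top, hcard] at hwt; omega
      · rw [h1, wt_comp_perm, hwu] at hwt; omega
      · exact hD
    have hmkU : ∀ (s' : ↥(Cgroup i)) (r : ↥H), φ (QuotientGroup.mk s') = QuotientGroup.mk r →
        F (Sum.elim (u₀ ∘ ⇑(s' : Equiv.Perm (Fin i))) (y₀ ∘ ⇑(r : Equiv.Perm β))) := by
      intro s' r h
      right; right; left
      exact ⟨s', r, h, rfl, rfl⟩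
    have hmkP : ∀ (s' : ↥(Cgroup i)) (r : ↥H), φ (QuotientGroup.mk s') = QuotientGroup.mk r →
        F (Sum.elim (p₀ ∘ ⇑(s' : Equiv.Perm (Fin i))) (y₀ ∘ ⇑(r : Equiv.Perm β))) := by
      intro s' r h
      right; right; right
      exact ⟨s', r, h, rfl, rfl⟩
    obtain ⟨s₀, hs₀σ, hs₀θ⟩ := hC σ θ (hA u₀ hmkU hcharU) (hA p₀ hmkP hcharP)
    rw [mem_subdirectSum']
    refine ⟨s₀, τh, ?_, ?_⟩
    · rw [hs₀θ, hφθ]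
    · rw [hπeq, ← hs₀σ]; rfl

end Helpers

theorem subdirectSum_cyclic_representable
    (i : ℕ) (hi : i ∈ ({3, 4, 5} : Set ℕ)) {β : Type*} [Fintype β]
    (H : Subgroup (Equiv.Perm β))
    (B : Subgroup (Equiv.Perm β)) (hHB : H ≤ B) (hB : IsDirectSumOfRegular B)
    (M : Subgroup (Cgroup i)) [M.Normal] (N : Subgroup H) [N.Normal]
    (φ : ↥(Cgroup i) ⧸ M ≃* ↥H ⧸ N) (hM : M ≠ ⊤)
    (hH : Representable 2 H) :
    Representable 2 (subdirectSum (Cgroup i) H M N φ) := by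
  obtain ⟨f₀, hf₀⟩ := hH
  have hβ : Nonempty β := by
    by_contra hne
    have hE : IsEmpty β := not_nonempty_iff.mp hne
    have hsub : ∀ a b : ↥H ⧸ N, a = b := by
      have hperm : ∀ g h : Equiv.Perm β, g = h := fun g h => Equiv.ext (fun b => hE.elim b)
      have hsubH : ∀ g h : ↥H, g = h := fun g h => Subtype.ext (hperm _ _)
      intro a b
      obtain ⟨x, rfl⟩ := QuotientGroup.mk_surjective a
      obtain ⟨y, rfl⟩ := QuotientGroup.mk_surjective b
      rw [hsubH x y]
    apply hM
    rw [Subgroup.eq_top_iff']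
    intro s
    rw [← QuotientGroup.eq_one_iff s]
    apply φ.injective
    rw [map_one]
    exact hsub _ _
  obtain ⟨y₀, hP1, hP2⟩ := exists_free_point B hB
  have hy₀ : ∃ b, y₀ b = true := hP2 hβ.some
  have hy₀free : ∀ r r' : ↥H,
      y₀ ∘ ⇑(r : Equiv.Perm β) = y₀ ∘ ⇑(r' : Equiv.Perm β) → r = r' := by
    intro r r' h
    have hcomp : y₀ ∘ ⇑((r * r'⁻¹ : ↥H) : Equiv.Perm β) = y₀ := by
      funext b
      have h2 := congrFun h (((r' : Equiv.Perm β))⁻¹ b)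
      simp only [Function.comp_apply, Equiv.Perm.coe_inv, Equiv.apply_symm_apply] at h2
      have h3 : ((r * r'⁻¹ : ↥H) : Equiv.Perm β) b
          = (r : Equiv.Perm β) (((r' : Equiv.Perm β))⁻¹ b) := by
        simp [Subgroup.coe_mul]
      simp only [Function.comp_apply]
      rw [h3]
      exact h2
    have h4 := hP1 _ (hHB (r * r'⁻¹).2) hcomp
    have h5 : (r * r'⁻¹ : ↥H) = 1 := Subtype.ext h4
    exact mul_inv_eq_one.mp h5
  simp only [Set.mem_insert_iff, Set.mem_singleton_iff] at hi
  rcases hi with rfl | rfl | rfl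
  · refine aux_main (by norm_num) H M N φ
      (fun x : Fin 3 => decide (x = 0)) (fun x : Fin 3 => decide (x = 0 ∨ x = 1)) y₀
      (by decide) (by decide) hy₀ hy₀free f₀ hf₀ ?_
    intro σ θ hA1 _
    refine auxC_bot' M (Mclass3 M hM) _ 0 (by decide) ?_ σ θ hA1
    intro a
    have h : ∀ a : Fin 3, ∃ k : Fin 3, ((finRotate 3) ^ (k:ℕ)) a = 0 := by decide
    obtain ⟨k, hk⟩ := h a
    exact ⟨cE 3 ^ (k:ℕ), by rw [cE_pow_coe]; exact hk⟩
  · refine aux_main (by norm_num) H M N φ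
      (fun x : Fin 4 => decide (x = 0)) (fun x : Fin 4 => decide (x = 0 ∨ x = 1)) y₀
      (by decide) (by decide) hy₀ hy₀free f₀ hf₀ ?_
    intro σ θ hA1 hA2
    exact hC4 M hM σ θ hA1 hA2
  · refine aux_main (by norm_num) H M N φ
      (fun x : Fin 5 => decide (x = 0)) (fun x : Fin 5 => decide (x = 0 ∨ x = 1)) y₀
      (by decide) (by decide) hy₀ hy₀free f₀ hf₀ ?_
    intro σ θ hA1 _
    refine auxC_bot' M (Mclass5 M hM) _ 0 (by decide) ?_ σ θ hA1
    intro a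
    have h : ∀ a : Fin 5, ∃ k : Fin 5, ((finRotate 5) ^ (k:ℕ)) a = 0 := by decide
    obtain ⟨k, hk⟩ := h a
    exact ⟨cE 5 ^ (k:ℕ), by rw [cE_pow_coe]; exact hk⟩
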